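/- arXiv:2209.14982 — 3 statements merged into one kernel-verified Lean document; each statement's English description precedes it below -/
import Mathlib

section
/- Let U be a compact metric space, let v : ℝ^d → P(U) be a measurable map into the space of Borel probability measures on U, and for each n let {U_{n,i}}_{i=1}^{k_n} be a measurable partition of U with diam(U_{n,i}) < 2/n, with representative points ζ_{n,i} ∈ U_{n,i}. Define v_n(x) = Σ_i v(x)(U_{n,i}) δ_{ζ_{n,i}}. Then for all f ∈ L¹(ℝ^d) ∩ L²(ℝ^d) and all bounded continuous g : ℝ^d × U → ℝ, lim_{n→∞} ∫_{ℝ^d} f(x) ∫_U g(x,ζ) v_n(x)(dζ) dx = ∫_{ℝ^d} f(x) ∫_U g(x,ζ) v(x)(dζ) dx. -/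
open MeasureTheory Filter
open scoped NNReal Topology

section Aux

variable {U : Type*} [MetricSpace U] [CompactSpace U] [MeasurableSpace U] [BorelSpace U]
variable {X : Type*} [MeasurableSpace X]

lemma aux_meas_closed (v : X → ProbabilityMeasure U)
    (hv : ∀ g : U → ℝ, Continuous g → Measurable fun x => ∫ ζ, g ζ ∂(v x : Measure U))
    {F : Set U} (hF : IsClosed F) :
    Measurable fun x => ((v x : Measure U) F).toReal := by
  rcases Set.eq_empty_or_nonempty F with rfl | hne
  · simpa using measurable_const (a := (0 : ℝ))
  · set fk : ℕ → U → ℝ := fun k z => max (1 - k * Metric.infDist z F) 0 with hfk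
    have hcont : ∀ k, Continuous (fk k) := fun k =>
      ((continuous_const.sub (continuous_const.mul (Metric.continuous_infDist_pt F))).max
        continuous_const)
    have hb : ∀ k z, ‖fk k z‖ ≤ 1 := by
      intro k z
      have h0 : 0 ≤ fk k z := le_max_right _ _
      have h1 : fk k z ≤ 1 := by
        apply max_le _ zero_le_one
        have : (0:ℝ) ≤ k * Metric.infDist z F :=
          mul_nonneg (by positivity) (Metric.infDist_nonneg)
        linarith
      rw [Real.norm_eq_abs, abs_of_nonneg h0]; exact h1
    have hptw : ∀ z, Tendsto (fun k => fk k z) atTop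
        (𝓝 (Set.indicator F (fun _ => (1:ℝ)) z)) := by
      intro z
      by_cases hz : z ∈ F
      · have : ∀ k, fk k z = 1 := by
          intro k
          simp [hfk, Metric.infDist_zero_of_mem hz]
        simp only [Set.indicator_of_mem hz]
        simpa [this] using tendsto_const_nhds
      · have hpos : 0 < Metric.infDist z F := (hF.notMem_iff_infDist_pos hne).1 hz
        rw [Set.indicator_of_notMem hz]
        apply tendsto_const_nhds.congr'
        obtain ⟨N, hN⟩ := exists_nat_ge (1 / Metric.infDist z F)
        filter_upwards [eventually_ge_atTop N] with k hk
        have hk' : (1:ℝ) ≤ k * Metric.infDist z F := by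
          have h1 : (1:ℝ) / Metric.infDist z F ≤ (k:ℝ) :=
            le_trans hN (by exact_mod_cast hk)
          calc (1:ℝ) = (1 / Metric.infDist z F) * Metric.infDist z F := by
                field_simp
            _ ≤ (k:ℝ) * Metric.infDist z F := by
                exact mul_le_mul_of_nonneg_right h1 hpos.le
        simp [hfk, max_eq_right, sub_nonpos.2 hk']
    have key : ∀ x, Tendsto (fun k => ∫ z, fk k z ∂(v x : Measure U)) atTop
        (𝓝 (((v x : Measure U) F).toReal)) := by
      intro x
      have h := tendsto_integral_of_dominated_convergence (μ := (v x : Measure U))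
        (F := fun k => fk k) (f := Set.indicator F (fun _ => (1:ℝ)))
        (fun _ => (1:ℝ))
        (fun k => (hcont k).aestronglyMeasurable)
        (integrable_const 1)
        (fun k => Eventually.of_forall fun z => hb k z)
        (Eventually.of_forall hptw)
      have hind : ∫ z, Set.indicator F (fun _ => (1:ℝ)) z ∂(v x : Measure U)
          = ((v x : Measure U) F).toReal := by
        exact integral_indicator_one (μ := (v x : Measure U)) hF.measurableSet
      rwa [hind] at h
    exact measurable_of_tendsto_metrizable' atTop (fun k => hv (fk k) (hcont k))
      (tendsto_pi_nhds.2 key)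

lemma aux_meas (v : X → ProbabilityMeasure U)
    (hv : ∀ g : U → ℝ, Continuous g → Measurable fun x => ∫ ζ, g ζ ∂(v x : Measure U))
    {A : Set U} (hA : MeasurableSet A) :
    Measurable fun x => (v x : Measure U) A := by
  have h_eq : (‹MeasurableSpace U› : MeasurableSpace U)
      = MeasurableSpace.generateFrom {s : Set U | IsClosed s} :=
    BorelSpace.measurable_eq.trans borel_eq_generateFrom_isClosed
  refine MeasurableSpace.induction_on_inter
    (C := fun A _ => Measurable fun x => (v x : Measure U) A)
    h_eq isPiSystem_isClosed ?_ ?_ ?_ ?_ _ hA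
  · simp
  · intro t ht
    have h1 := (aux_meas_closed v hv ht).ennreal_ofReal
    have : (fun x => (v x : Measure U) t)
        = fun x => ENNReal.ofReal (((v x : Measure U) t).toReal) :=
      funext fun x => (ENNReal.ofReal_toReal (measure_ne_top _ _)).symm
    rw [this]; exact h1
  · intro t ht hC
    have : (fun x => (v x : Measure U) tᶜ) = fun x => 1 - (v x : Measure U) t :=
      funext fun x => prob_compl_eq_one_sub ht
    rw [this]; exact measurable_const.sub hC
  · intro s hdisj hm hC
    have : (fun x => (v x : Measure U) (⋃ i, s i))
        = fun x => ∑' i, (v x : Measure U) (s i) :=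
      funext fun x => measure_iUnion hdisj hm
    rw [this]; exact Measurable.ennreal_tsum hC

end Aux

/-- denseness of finite-action quantized policies in the Borkar topology.
`v_n(x) = Σ_i v(x)(U_{n,i}) δ_{ζ_{n,i}}`, so `∫ g(x,·) dv_n(x) = Σ_i v(x)(U_{n,i}) g(x, ζ_{n,i})`. -/
theorem stmt_2 {d : ℕ} {U : Type*} [MetricSpace U] [CompactSpace U]
    [MeasurableSpace U] [BorelSpace U]
    (v : (Fin d → ℝ) → ProbabilityMeasure U)
    (hv : ∀ g : U → ℝ, Continuous g →
      Measurable fun x => ∫ ζ, g ζ ∂(v x : Measure U))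
    (k : ℕ → ℕ) (Un : ∀ n, Fin (k n) → Set U) (ζpt : ∀ n, Fin (k n) → U)
    (hmeas : ∀ n i, MeasurableSet (Un n i))
    (hdisj : ∀ n, 1 ≤ n → Pairwise (Function.onFun Disjoint (Un n)))
    (hcover : ∀ n, 1 ≤ n → (⋃ i, Un n i) = Set.univ)
    (hdiam : ∀ n, 1 ≤ n → ∀ i, Metric.diam (Un n i) < 2 / n)
    (hpt : ∀ n, 1 ≤ n → ∀ i, ζpt n i ∈ Un n i)
    (f : (Fin d → ℝ) → ℝ) (hf1 : Integrable f) (hf2 : MemLp f 2)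
    (g : (Fin d → ℝ) × U → ℝ) (hg : Continuous g) (M : ℝ) (hgb : ∀ p, |g p| ≤ M) :
    Tendsto
      (fun n => ∫ x, f x * ∑ i : Fin (k n),
        ((v x (Un n i) : ℝ≥0) : ℝ) * g (x, ζpt n i))
      atTop
      (𝓝 (∫ x, f x * ∫ z, g (x, z) ∂(v x : Measure U))) := by
  haveI hUne : Nonempty U := (v (fun _ => 0)).nonempty
  have hM0 : 0 ≤ M := le_trans (abs_nonneg _) (hgb (fun _ => 0, Classical.arbitrary U))
  -- notation
  set S : (n : ℕ) → (Fin d → ℝ) → ℝ := fun n x =>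
    ∑ i : Fin (k n), ((v x (Un n i) : ℝ≥0) : ℝ) * g (x, ζpt n i) with hS
  -- coercion rewriting
  have hcoe : ∀ (x : Fin d → ℝ) (n : ℕ) (i : Fin (k n)),
      ((v x (Un n i) : ℝ≥0) : ℝ) = ((v x : Measure U) (Un n i)).toReal := by
    intro x n i
    rw [← ENNReal.coe_toReal, ProbabilityMeasure.ennreal_coeFn_eq_coeFn_toMeasure]
  -- measurability of S n
  have hSmeas : ∀ n, Measurable (S n) := by
    intro n
    apply Finset.measurable_sum
    intro i _
    have h1 : Measurable fun x => ((v x (Un n i) : ℝ≥0) : ℝ) := by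
      have := (aux_meas v hv (hmeas n i)).ennreal_toReal
      simpa only [← hcoe] using this
    exact h1.mul (hg.comp (continuous_id.prodMk continuous_const)).measurable
  -- sum of cell measures equals one, for n ≥ 1
  have hsum1 : ∀ n, 1 ≤ n → ∀ x,
      ∑ i : Fin (k n), ((v x : Measure U) (Un n i)).toReal = 1 := by
    intro n hn x
    have h1 : (v x : Measure U) Set.univ = ∑' i, (v x : Measure U) (Un n i) := by
      rw [← hcover n hn]
      exact measure_iUnion (hdisj n hn) (hmeas n)
    have h2 : ∑' i, (v x : Measure U) (Un n i) = ∑ i : Fin (k n), (v x : Measure U) (Un n i) :=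
      tsum_fintype _
    have h3 : (∑ i : Fin (k n), (v x : Measure U) (Un n i)) = 1 := by
      rw [← h2, ← h1, measure_univ]
    have h4 := congrArg ENNReal.toReal h3
    rwa [ENNReal.toReal_sum (fun i _ => measure_ne_top _ _)] at h4
  -- uniform bound |S n x| ≤ M for n ≥ 1
  have hSbound : ∀ n, 1 ≤ n → ∀ x, |S n x| ≤ M := by
    intro n hn x
    calc |S n x| ≤ ∑ i : Fin (k n), |((v x (Un n i) : ℝ≥0) : ℝ) * g (x, ζpt n i)| :=
          Finset.abs_sum_le_sum_abs _ _
      _ ≤ ∑ i : Fin (k n), ((v x : Measure U) (Un n i)).toReal * M := by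
          apply Finset.sum_le_sum
          intro i _
          rw [abs_mul, hcoe x n i, abs_of_nonneg ENNReal.toReal_nonneg]
          exact mul_le_mul_of_nonneg_left (hgb _) ENNReal.toReal_nonneg
      _ = (∑ i : Fin (k n), ((v x : Measure U) (Un n i)).toReal) * M := by
          rw [Finset.sum_mul]
      _ = M := by rw [hsum1 n hn x, one_mul]
  -- pointwise convergence of S n x
  have hSptw : ∀ x, Tendsto (fun n => S n x) atTop
      (𝓝 (∫ z, g (x, z) ∂(v x : Measure U))) := by
    intro x
    set gx : U → ℝ := fun z => g (x, z) with hgx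
    have hgxc : Continuous gx := hg.comp (continuous_const.prodMk continuous_id)
    have hgxint : Integrable gx (v x : Measure U) :=
      ⟨hgxc.aestronglyMeasurable, HasFiniteIntegral.of_bounded (C := M)
        (Eventually.of_forall fun z => by
          simpa [Real.norm_eq_abs] using hgb (x, z))⟩
    have hgxu : UniformContinuous gx := CompactSpace.uniformContinuous_of_continuous hgxc
    rw [Metric.tendsto_atTop]
    intro ε hε
    obtain ⟨δ, hδ, hδ'⟩ := Metric.uniformContinuous_iff.1 hgxu (ε/2) (by positivity)
    obtain ⟨N, hN⟩ := exists_nat_gt (2 / δ)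
    refine ⟨max N 1, fun n hn => ?_⟩
    have hn1 : 1 ≤ n := le_trans (le_max_right _ _) hn
    have hnN : (N : ℝ) ≤ n := by exact_mod_cast le_trans (le_max_left _ _) hn
    have hnpos : (0:ℝ) < n := by exact_mod_cast hn1
    have hdn : 2 / (n:ℝ) < δ := by
      have hNpos : (0:ℝ) < N := lt_of_le_of_lt (by positivity) hN
      rw [div_lt_iff₀ hnpos]
      rw [div_lt_iff₀ hδ] at hN
      calc (2:ℝ) < N * δ := by linarith [hN]
        _ ≤ n * δ := mul_le_mul_of_nonneg_right hnN hδ.le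
        _ = δ * n := mul_comm _ _
    -- key distance estimate within each cell
    have hcell : ∀ i : Fin (k n), ∀ z ∈ Un n i, ‖gx (ζpt n i) - gx z‖ ≤ ε/2 := by
      intro i z hz
      have hd : dist (ζpt n i) z < δ := by
        calc dist (ζpt n i) z ≤ Metric.diam (Un n i) :=
              Metric.dist_le_diam_of_mem Metric.isBounded_of_compactSpace (hpt n hn1 i) hz
          _ < 2 / n := hdiam n hn1 i
          _ < δ := hdn
      have := hδ' hd
      rw [Real.dist_eq] at this
      exact le_of_lt (by simpa [Real.norm_eq_abs] using this)
    -- decompose the integral over the partition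
    have hintdec : ∫ z, gx z ∂(v x : Measure U)
        = ∑ i : Fin (k n), ∫ z in Un n i, gx z ∂(v x : Measure U) := by
      rw [← integral_iUnion_fintype (hmeas n) (hdisj n hn1)
        (fun i => hgxint.integrableOn), hcover n hn1]
      simp [Measure.restrict_univ]
    have hterm : ∀ i : Fin (k n),
        ((v x (Un n i) : ℝ≥0) : ℝ) * gx (ζpt n i) - ∫ z in Un n i, gx z ∂(v x : Measure U)
        = ∫ z in Un n i, (gx (ζpt n i) - gx z) ∂(v x : Measure U) := by
      intro i
      rw [integral_sub (integrableOn_const (s := Un n i) (μ := (v x : Measure U)) (C := gx (ζpt n i)) (measure_lt_top _ _).ne)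
        hgxint.integrableOn, setIntegral_const, hcoe x n i]
      simp [smul_eq_mul]
      exact Or.inl (hcoe x n i).symm
    have htermbd : ∀ i : Fin (k n),
        ‖∫ z in Un n i, (gx (ζpt n i) - gx z) ∂(v x : Measure U)‖
          ≤ (ε/2) * ((v x : Measure U) (Un n i)).toReal := by
      intro i
      exact norm_setIntegral_le_of_norm_le_const_ae' (measure_lt_top _ _)
        (Eventually.of_forall fun z hz => hcell i z hz)
    have hdiff : |S n x - ∫ z, gx z ∂(v x : Measure U)| ≤ ε/2 := by
      rw [hintdec, ← Finset.sum_sub_distrib]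
      calc |∑ i : Fin (k n),
            (((v x (Un n i) : ℝ≥0) : ℝ) * gx (ζpt n i)
              - ∫ z in Un n i, gx z ∂(v x : Measure U))|
          ≤ ∑ i : Fin (k n), |((v x (Un n i) : ℝ≥0) : ℝ) * gx (ζpt n i)
              - ∫ z in Un n i, gx z ∂(v x : Measure U)| :=
            Finset.abs_sum_le_sum_abs _ _
        _ ≤ ∑ i : Fin (k n), (ε/2) * ((v x : Measure U) (Un n i)).toReal := by
            apply Finset.sum_le_sum
            intro i _
            rw [hterm i]
            simpa [Real.norm_eq_abs] using htermbd i
        _ = (ε/2) * ∑ i : Fin (k n), ((v x : Measure U) (Un n i)).toReal := by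
            rw [Finset.mul_sum]
        _ = ε/2 := by rw [hsum1 n hn1 x, mul_one]
    calc dist (S n x) (∫ z, gx z ∂(v x : Measure U))
        = |S n x - ∫ z, gx z ∂(v x : Measure U)| := Real.dist_eq _ _
      _ ≤ ε/2 := hdiff
      _ < ε := by linarith
  -- assemble with dominated convergence (shifting index by one)
  have hmain : Tendsto (fun n => ∫ x, f x * S (n+1) x) atTop
      (𝓝 (∫ x, f x * ∫ z, g (x, z) ∂(v x : Measure U))) := by
    refine tendsto_integral_of_dominated_convergence (fun x => |f x| * M)
      (fun n => (hf1.aestronglyMeasurable.aemeasurable.mul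
        (hSmeas (n+1)).aemeasurable).aestronglyMeasurable) ?_ ?_ ?_
    · exact hf1.abs.mul_const M
    · intro n
      apply Eventually.of_forall
      intro x
      rw [Real.norm_eq_abs, abs_mul]
      exact mul_le_mul_of_nonneg_left (hSbound (n+1) (Nat.le_add_left 1 n) x) (abs_nonneg _)
    · apply Eventually.of_forall
      intro x
      exact ((hSptw x).comp (tendsto_add_atTop_nat 1)).const_mul (f x)
  exact (tendsto_add_atTop_iff_nat 1).1 hmain
end

section
/- Let η_n, η be probability measures on ℝ^d with densities φ_n, φ ∈ L¹(ℝ^d) (with respect to Lebesgue measure) such that φ_n → φ in L¹(ℝ^d). Let U be a compact metric space, c : ℝ^d × U → ℝ bounded measurable, and v_n, v : ℝ^d → P(U) measurable with ∫_{ℝ^d} f(x) ∫_U g(x,ζ) v_n(x)(dζ) dx → ∫_{ℝ^d} f(x) ∫_U g(x,ζ) v(x)(dζ) dx for all f ∈ L¹ ∩ L² and bounded continuous g. If additionally c is bounded continuous, then ∫_{ℝ^d} ∫_U c(x,ζ) v_n(x)(dζ) η_n(dx) → ∫_{ℝ^d} ∫_U c(x,ζ) v(x)(dζ) η(dx). 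-/
open MeasureTheory Filter
open scoped Topology

lemma cont_integrable_aux {U : Type*} [MetricSpace U] [CompactSpace U]
    [MeasurableSpace U] [OpensMeasurableSpace U] (μ : Measure U) [IsFiniteMeasure μ]
    (g : U → ℝ) (hg : Continuous g) : Integrable g μ := by
  exact (BoundedContinuousFunction.mkOfCompact ⟨g, hg⟩).integrable (μ := μ)

lemma meas_int_aux {d : ℕ} {U : Type*} [MetricSpace U] [CompactSpace U]
    [MeasurableSpace U] [BorelSpace U]
    (v : (Fin d → ℝ) → ProbabilityMeasure U)
    (hv : ∀ g : U → ℝ, Continuous g → Measurable fun x => ∫ ζ, g ζ ∂(v x : Measure U))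
    (c : (Fin d → ℝ) × U → ℝ) (hc : Continuous c) :
    Measurable fun x => ∫ ζ, c (x, ζ) ∂(v x : Measure U) := by
  set Φ : (Fin d → ℝ) → C(U, ℝ) := fun x => (ContinuousMap.mk c hc).curry x with hΦdef
  have hΦcont : Continuous Φ := (ContinuousMap.mk c hc).curry.continuous
  have hΦ : StronglyMeasurable Φ := hΦcont.stronglyMeasurable
  have key : ∀ s : SimpleFunc (Fin d → ℝ) C(U, ℝ),
      Measurable fun x => ∫ ζ, (s x) ζ ∂(v x : Measure U) := by
    intro s
    induction s using SimpleFunc.induction with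
    | @const g A hA =>
      have : (fun x => ∫ ζ, ((SimpleFunc.piecewise A hA (SimpleFunc.const _ g)
          (SimpleFunc.const _ (0 : C(U, ℝ)))) x) ζ ∂(v x : Measure U))
          = A.indicator (fun x => ∫ ζ, g ζ ∂(v x : Measure U)) := by
        funext x
        by_cases hx : x ∈ A <;>
          simp [SimpleFunc.piecewise_apply, hx, Set.indicator_apply]
      rw [this]
      exact (hv g g.continuous).indicator hA
    | @add f g _ hf hg =>
      have : (fun x => ∫ ζ, ((f + g) x) ζ ∂(v x : Measure U))
          = fun x => (∫ ζ, (f x) ζ ∂(v x : Measure U)) + ∫ ζ, (g x) ζ ∂(v x : Measure U) := by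
        funext x
        rw [← integral_add (cont_integrable_aux _ _ (f x).continuous)
          (cont_integrable_aux _ _ (g x).continuous)]
        simp
      rw [this]
      exact hf.add hg
  apply measurable_of_tendsto_metrizable (fun k => key (hΦ.approx k))
  rw [tendsto_pi_nhds]
  intro x
  rw [tendsto_iff_dist_tendsto_zero]
  have hlim : Tendsto (fun k => dist (hΦ.approx k x) (Φ x)) atTop (𝓝 0) :=
    tendsto_iff_dist_tendsto_zero.mp (hΦ.tendsto_approx x)
  refine squeeze_zero (fun k => dist_nonneg) (fun k => ?_) hlim
  have h1 : ∀ ζ, ‖(hΦ.approx k x) ζ - (Φ x) ζ‖ ≤ dist (hΦ.approx k x) (Φ x) := by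
    intro ζ
    simpa [Real.dist_eq] using ContinuousMap.dist_apply_le_dist (f := hΦ.approx k x)
      (g := Φ x) ζ
  calc dist (∫ ζ, (hΦ.approx k x) ζ ∂(v x : Measure U))
        (∫ ζ, c (x, ζ) ∂(v x : Measure U))
      = ‖∫ ζ, ((hΦ.approx k x) ζ - (Φ x) ζ) ∂(v x : Measure U)‖ := by
        rw [integral_sub (cont_integrable_aux _ _ (hΦ.approx k x).continuous)
          (cont_integrable_aux _ _ (Φ x).continuous)]
        simp [Real.dist_eq, hΦdef, ContinuousMap.curry]
    _ ≤ dist (hΦ.approx k x) (Φ x) :=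
        norm_integral_le_of_norm_le_const (Filter.Eventually.of_forall h1) |>.trans (by simp)

/-- splitting argument in Theorem 3.5: L¹ convergence of densities plus
Borkar-topology convergence of policies gives convergence of the ergodic cost integrals. -/
theorem stmt_12 {d : ℕ} {U : Type*} [MetricSpace U] [CompactSpace U]
    [MeasurableSpace U] [BorelSpace U]
    (φn : ℕ → (Fin d → ℝ) → ℝ) (φ : (Fin d → ℝ) → ℝ)
    (hφn : ∀ n, Integrable (φn n)) (hφnpos : ∀ n x, 0 ≤ φn n x)
    (hφnprob : ∀ n, ∫ x, φn n x = 1)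
    (hφ : Integrable φ) (hφ2 : MemLp φ 2) (hφpos : ∀ x, 0 ≤ φ x)
    (hφprob : ∫ x, φ x = 1)
    (hL1 : Tendsto (fun n => ∫ x, |φn n x - φ x|) atTop (𝓝 0))
    (v : ℕ → (Fin d → ℝ) → ProbabilityMeasure U)
    (w : (Fin d → ℝ) → ProbabilityMeasure U)
    (hvmeas : ∀ n (g : U → ℝ), Continuous g →
      Measurable fun x => ∫ ζ, g ζ ∂(v n x : Measure U))
    (hwmeas : ∀ g : U → ℝ, Continuous g →
      Measurable fun x => ∫ ζ, g ζ ∂(w x : Measure U))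
    (hborkar : ∀ f : (Fin d → ℝ) → ℝ, Integrable f → MemLp f 2 →
      ∀ g : (Fin d → ℝ) × U → ℝ, Continuous g → (∃ M, ∀ p, |g p| ≤ M) →
      Tendsto (fun n => ∫ x, f x * ∫ ζ, g (x, ζ) ∂(v n x : Measure U)) atTop
        (𝓝 (∫ x, f x * ∫ ζ, g (x, ζ) ∂(w x : Measure U))))
    (c : (Fin d → ℝ) × U → ℝ) (hc : Continuous c) (M : ℝ) (hcb : ∀ p, |c p| ≤ M) :
    Tendsto (fun n => ∫ x, (∫ ζ, c (x, ζ) ∂(v n x : Measure U)) * φn n x) atTop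
      (𝓝 (∫ x, (∫ ζ, c (x, ζ) ∂(w x : Measure U)) * φ x)) := by
  -- notation
  set Fn : ℕ → (Fin d → ℝ) → ℝ := fun n x => ∫ ζ, c (x, ζ) ∂(v n x : Measure U) with hFn
  set F : (Fin d → ℝ) → ℝ := fun x => ∫ ζ, c (x, ζ) ∂(w x : Measure U) with hF
  have hFnmeas : ∀ n, Measurable (Fn n) := fun n => meas_int_aux (v n) (hvmeas n) c hc
  have hM0 : 0 ≤ M := le_trans (abs_nonneg _) (hcb ((fun _ => 0), (w (fun _ => 0)).nonempty.some))
  have hFnbd : ∀ n x, |Fn n x| ≤ M := by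
    intro n x
    calc |Fn n x| = ‖∫ ζ, c (x, ζ) ∂(v n x : Measure U)‖ := rfl
      _ ≤ M := by
        refine (norm_integral_le_of_norm_le_const (C := M)
          (Filter.Eventually.of_forall fun ζ => ?_)).trans (by simp)
        simpa [Real.norm_eq_abs] using hcb (x, ζ)
  -- integrability of products
  have hint1 : ∀ n, Integrable (fun x => Fn n x * φn n x) :=
    fun n => (hφn n).bdd_mul (hFnmeas n).aestronglyMeasurable
      (Filter.Eventually.of_forall fun x => by simpa [Real.norm_eq_abs] using hFnbd n x)
  have hint2 : ∀ n, Integrable (fun x => Fn n x * φ x) :=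
    fun n => hφ.bdd_mul (hFnmeas n).aestronglyMeasurable
      (Filter.Eventually.of_forall fun x => by simpa [Real.norm_eq_abs] using hFnbd n x)
  -- second term: Borkar convergence with f = φ, g = c
  have hB : Tendsto (fun n => ∫ x, Fn n x * φ x) atTop (𝓝 (∫ x, F x * φ x)) := by
    have := hborkar φ hφ hφ2 c hc ⟨M, hcb⟩
    simpa [mul_comm] using this
  -- first term: difference bounded by M * ∫ |φn - φ|
  have hA : Tendsto (fun n => (∫ x, Fn n x * φn n x) - ∫ x, Fn n x * φ x) atTop (𝓝 0) := by
    have hbound : ∀ n, |(∫ x, Fn n x * φn n x) - ∫ x, Fn n x * φ x|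
        ≤ M * ∫ x, |φn n x - φ x| := by
      intro n
      rw [← integral_sub (hint1 n) (hint2 n)]
      have h1 : ∀ x, ‖Fn n x * φn n x - Fn n x * φ x‖ ≤ M * |φn n x - φ x| := by
        intro x
        rw [← mul_sub]
        calc ‖Fn n x * (φn n x - φ x)‖ = |Fn n x| * |φn n x - φ x| := abs_mul _ _
          _ ≤ M * |φn n x - φ x| := by
            exact mul_le_mul_of_nonneg_right (hFnbd n x) (abs_nonneg _)
      calc |∫ x, (Fn n x * φn n x - Fn n x * φ x)|
          ≤ ∫ x, M * |φn n x - φ x| := by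
            refine (norm_integral_le_integral_norm (fun x => Fn n x * φn n x - Fn n x * φ x)).trans ?_
            refine integral_mono_of_nonneg (Filter.Eventually.of_forall fun x => norm_nonneg _)
              (((hφn n).sub hφ).abs.const_mul M) (Filter.Eventually.of_forall h1)
        _ = M * ∫ x, |φn n x - φ x| := by rw [integral_const_mul]
    have hMlim : Tendsto (fun n => M * ∫ x, |φn n x - φ x|) atTop (𝓝 0) := by
      simpa using hL1.const_mul M
    refine squeeze_zero_norm (fun n => ?_) hMlim
    simpa [Real.norm_eq_abs] using hbound n
  have := hA.add hB
  simpa using this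
end

section
/- Let f ∈ L¹([0,∞) × ℝ^d) ∩ L²([0,∞) × ℝ^d), let U be a compact metric space, and let v : ℝ^d × [0,∞) → P(U) be Borel measurable. Then there exists a sequence of policies v_m : ℝ^d × [0,∞) → P(U), each taking finitely many values and piecewise constant on a countable measurable partition of ℝ^d × [0,∞) into sets of the form (annulus in space) × (interval in time) further partitioned by preimages of Prokhorov cells, such that for all such f and all bounded continuous g : ℝ^d × [0,∞) × U → ℝ, lim_{m→∞} ∫_0^∞ ∫_{ℝ^d} f(x,t) ∫_U g(x,t,ζ) v_m(x,t)(dζ) dx dt = ∫_0^∞ ∫_{ℝ^d} f(x,t) ∫_U g(x,t,ζ) v(x,t)(dζ) dx dt. -/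
open MeasureTheory Filter
open scoped Topology

/-- Theorem 6.2: piecewise constant (finitely-valued, measurable) Markov
policies are dense in the space of Markov policies under the Borkar topology. -/
theorem stmt_17 {d : ℕ} {U : Type*} [MetricSpace U] [CompactSpace U]
    [MeasurableSpace U] [BorelSpace U]
    (v : (Fin d → ℝ) × ℝ → ProbabilityMeasure U)
    (hv : ∀ g : U → ℝ, Continuous g →
      Measurable fun p => ∫ ζ, g ζ ∂(v p : Measure U)) :
    ∃ vm : ℕ → (Fin d → ℝ) × ℝ → ProbabilityMeasure U,
      (∀ m, (Set.range (vm m)).Finite) ∧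
      (∀ m (g : U → ℝ), Continuous g →
        Measurable fun p => ∫ ζ, g ζ ∂(vm m p : Measure U)) ∧
      ∀ f : (Fin d → ℝ) × ℝ → ℝ, Integrable f → MemLp f 2 →
        ∀ g : (Fin d → ℝ) × ℝ × U → ℝ, Continuous g → (∃ M, ∀ q, |g q| ≤ M) →
        Tendsto
          (fun m => ∫ p in {p : (Fin d → ℝ) × ℝ | 0 ≤ p.2},
            f p * ∫ ζ, g (p.1, p.2, ζ) ∂(vm m p : Measure U)) atTop
          (𝓝 (∫ p in {p : (Fin d → ℝ) × ℝ | 0 ≤ p.2},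
            f p * ∫ ζ, g (p.1, p.2, ζ) ∂(v p : Measure U))) := by
  classical
  haveI : Nonempty C(U, ℝ) := ⟨ContinuousMap.const U 0⟩
  obtain ⟨gs, hgs⟩ : ∃ gs : ℕ → C(U, ℝ), DenseRange gs :=
    ⟨TopologicalSpace.denseSeq C(U, ℝ), TopologicalSpace.denseRange_denseSeq C(U, ℝ)⟩
  letI : MetricSpace (ℕ → ℝ) := PiCountable.metricSpace
  set w : ((Fin d → ℝ) × ℝ) → ℕ → ℝ := fun p n => ∫ ζ, gs n ζ ∂(v p : Measure U) with hw_def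
  have hw : Measurable w := measurable_pi_lambda _ fun n => hv (gs n) (gs n).continuous
  set ψ : (ℕ → ℝ) → ProbabilityMeasure U :=
    fun y => if h : ∃ p, w p = y then v h.choose else v (0, 0) with hψ_def
  have hψ : ∀ y ∈ Set.range w, ∀ n, (∫ ζ, gs n ζ ∂(ψ y : Measure U)) = y n := by
    rintro y ⟨p, rfl⟩ n
    have h : ∃ q, w q = w p := ⟨p, rfl⟩
    simp only [hψ_def, dif_pos h]
    calc (∫ ζ, gs n ζ ∂(v h.choose : Measure U)) = w h.choose n := rfl
      _ = w p n := by rw [h.choose_spec]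
  have hp0 : w (0, 0) ∈ Set.range w := Set.mem_range_self _
  set sf : ℕ → MeasureTheory.SimpleFunc ((Fin d → ℝ) × ℝ) (ℕ → ℝ) :=
    fun m => MeasureTheory.SimpleFunc.approxOn w hw (Set.range w) (w (0, 0)) hp0 m with hsf_def
  have hsf_mem : ∀ m p, sf m p ∈ Set.range w :=
    fun m p => SimpleFunc.approxOn_mem hw hp0 m p
  have hsf_tendsto : ∀ p, Tendsto (fun m => sf m p) atTop (𝓝 (w p)) :=
    fun p => SimpleFunc.tendsto_approxOn hw hp0 (subset_closure (Set.mem_range_self p))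
  refine ⟨fun m p => ψ (sf m p), ?_, ?_, ?_⟩
  · -- finite range
    intro m
    have h1 : Set.range (fun p => ψ (sf m p)) ⊆ ψ '' Set.range (sf m) := by
      rintro _ ⟨p, rfl⟩; exact ⟨sf m p, ⟨p, rfl⟩, rfl⟩
    exact ((sf m).finite_range.image ψ).subset h1
  · -- measurability of integrals of continuous functions
    intro m g hg
    have h1 : (fun p => ∫ ζ, g ζ ∂(ψ (sf m p) : Measure U))
        = ⇑((sf m).map (fun y => ∫ ζ, g ζ ∂(ψ y : Measure U))) := by
      funext p; rw [SimpleFunc.map_apply]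
    rw [h1]
    exact SimpleFunc.measurable _
  · -- convergence
    intro f hf _hf2 g hg hgbdd
    obtain ⟨M, hM⟩ := hgbdd
    have hcoord : ∀ p n, Tendsto (fun m => sf m p n) atTop (𝓝 (w p n)) := by
      intro p n
      have h := hsf_tendsto p
      rw [Metric.tendsto_atTop] at h ⊢
      intro ε hε
      obtain ⟨N, hN⟩ := h (min ((1/2 : ℝ) ^ Encodable.encode n) ε) (lt_min (by positivity) hε)
      refine ⟨N, fun m hm => ?_⟩
      have h1 := hN m hm
      have h2 : dist (sf m p) (w p) < (1/2 : ℝ) ^ Encodable.encode n :=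
        lt_of_lt_of_le h1 (min_le_left _ _)
      exact lt_of_le_of_lt (PiCountable.dist_le_dist_pi_of_dist_lt (by rwa [one_div] at h2))
        (lt_of_lt_of_le h1 (min_le_right _ _))
    have hcint : ∀ (G : C(U, ℝ)) (μ : ProbabilityMeasure U),
        Integrable (fun ζ => G ζ) (μ : Measure U) := by
      intro G μ
      exact (BoundedContinuousFunction.mkOfCompact G).integrable (μ : Measure U)
    have hGbd : ∀ (G₁ G₂ : C(U, ℝ)) (μ : ProbabilityMeasure U),
        |(∫ ζ, G₁ ζ ∂(μ : Measure U)) - ∫ ζ, G₂ ζ ∂(μ : Measure U)| ≤ dist G₁ G₂ := by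
      intro G₁ G₂ μ
      rw [← integral_sub (hcint G₁ μ) (hcint G₂ μ)]
      have hb : ∀ ζ, ‖G₁ ζ - G₂ ζ‖ ≤ dist G₁ G₂ := by
        intro ζ
        rw [Real.norm_eq_abs, ← Real.dist_eq]
        exact ContinuousMap.dist_apply_le_dist ζ
      calc ‖∫ ζ, (G₁ ζ - G₂ ζ) ∂(μ : Measure U)‖
          ≤ dist G₁ G₂ * ((μ : Measure U) Set.univ).toReal :=
            norm_integral_le_of_norm_le_const (Eventually.of_forall hb)
        _ = dist G₁ G₂ := by simp
    have key : ∀ (F : C(U, ℝ)) (p : (Fin d → ℝ) × ℝ),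
        Tendsto (fun m => ∫ ζ, F ζ ∂(ψ (sf m p) : Measure U)) atTop
          (𝓝 (∫ ζ, F ζ ∂(v p : Measure U))) := by
      intro F p
      rw [Metric.tendsto_atTop]
      intro ε hε
      obtain ⟨n, hn⟩ := hgs.exists_dist_lt F (by positivity : (0:ℝ) < ε/3)
      have hc : Tendsto (fun m => ∫ ζ, gs n ζ ∂(ψ (sf m p) : Measure U)) atTop (𝓝 (w p n)) := by
        have he : ∀ m, (∫ ζ, gs n ζ ∂(ψ (sf m p) : Measure U)) = sf m p n :=
          fun m => hψ _ (hsf_mem m p) n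
        simpa only [he] using hcoord p n
      rw [Metric.tendsto_atTop] at hc
      obtain ⟨N, hN⟩ := hc (ε/3) (by positivity)
      refine ⟨N, fun m hm => ?_⟩
      have h1 : |(∫ ζ, F ζ ∂(ψ (sf m p) : Measure U))
          - ∫ ζ, gs n ζ ∂(ψ (sf m p) : Measure U)| < ε/3 :=
        lt_of_le_of_lt (hGbd F (gs n) _) hn
      have h2 : |(∫ ζ, gs n ζ ∂(ψ (sf m p) : Measure U)) - w p n| < ε/3 := by
        have := hN m hm; rwa [Real.dist_eq] at this
      have h3 : |w p n - ∫ ζ, F ζ ∂(v p : Measure U)| < ε/3 := by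
        have h4 := hGbd (gs n) F (v p)
        rw [dist_comm] at h4
        exact lt_of_le_of_lt h4 hn
      rw [Real.dist_eq]
      calc |(∫ ζ, F ζ ∂(ψ (sf m p) : Measure U)) - ∫ ζ, F ζ ∂(v p : Measure U)|
          ≤ |(∫ ζ, F ζ ∂(ψ (sf m p) : Measure U)) - ∫ ζ, gs n ζ ∂(ψ (sf m p) : Measure U)|
            + |(∫ ζ, gs n ζ ∂(ψ (sf m p) : Measure U)) - ∫ ζ, F ζ ∂(v p : Measure U)| :=
              abs_sub_le _ _ _
        _ ≤ |(∫ ζ, F ζ ∂(ψ (sf m p) : Measure U)) - ∫ ζ, gs n ζ ∂(ψ (sf m p) : Measure U)|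
            + (|(∫ ζ, gs n ζ ∂(ψ (sf m p) : Measure U)) - w p n|
              + |w p n - ∫ ζ, F ζ ∂(v p : Measure U)|) :=
              (add_le_add_iff_left _).2 (abs_sub_le _ _ _)
        _ < ε/3 + (ε/3 + ε/3) := add_lt_add h1 (add_lt_add h2 h3)
        _ = ε := by ring
    have hcont : ∀ y, Continuous fun q : (Fin d → ℝ) × ℝ =>
        ∫ ζ, g (q.1, q.2, ζ) ∂(ψ y : Measure U) := by
      intro y
      apply MeasureTheory.continuous_of_dominated (bound := fun _ => M)
      · exact fun q => ((hg.comp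
          ((continuous_const.prodMk (continuous_const.prodMk continuous_id))
            : Continuous fun ζ : U => ((q.1, q.2, ζ) : (Fin d → ℝ) × ℝ × U)))).aestronglyMeasurable
      · exact fun q => Eventually.of_forall fun ζ => by rw [Real.norm_eq_abs]; exact hM _
      · exact integrable_const M
      · exact Eventually.of_forall fun ζ => hg.comp
          ((continuous_fst.prodMk (continuous_snd.prodMk continuous_const))
            : Continuous fun q : (Fin d → ℝ) × ℝ => ((q.1, q.2, ζ) : (Fin d → ℝ) × ℝ × U))
    have hmeas : ∀ m, Measurable fun p : (Fin d → ℝ) × ℝ =>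
        ∫ ζ, g (p.1, p.2, ζ) ∂(ψ (sf m p) : Measure U) := by
      intro m
      have hrep : (fun p : (Fin d → ℝ) × ℝ => ∫ ζ, g (p.1, p.2, ζ) ∂(ψ (sf m p) : Measure U))
          = fun p => ∑ y ∈ (sf m).range,
              Set.indicator ((sf m) ⁻¹' {y})
                (fun q => ∫ ζ, g (q.1, q.2, ζ) ∂(ψ y : Measure U)) p := by
        funext p
        symm
        rw [Finset.sum_eq_single_of_mem (sf m p) (SimpleFunc.mem_range_self _ p)
            (fun y _ hne => Set.indicator_of_notMem
              (fun hp => hne (Set.mem_singleton_iff.mp (Set.mem_preimage.mp hp)).symm) _),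
          Set.indicator_of_mem (show p ∈ (sf m) ⁻¹' {(sf m) p} from rfl)]
      rw [hrep]
      exact Finset.measurable_sum _ fun y _ =>
        ((hcont y).measurable).indicator ((sf m).measurableSet_fiber y)
    apply MeasureTheory.tendsto_integral_of_dominated_convergence (fun p => |f p| * M)
    · exact fun m => (hf.aestronglyMeasurable.restrict).mul
        ((hmeas m).aestronglyMeasurable.restrict)
    · exact ((hf.restrict).abs).mul_const M
    · intro m
      refine Eventually.of_forall fun p => ?_
      rw [Real.norm_eq_abs, abs_mul]
      have hb : |∫ ζ, g (p.1, p.2, ζ) ∂(ψ (sf m p) : Measure U)| ≤ M := by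
        calc ‖∫ ζ, g (p.1, p.2, ζ) ∂(ψ (sf m p) : Measure U)‖
            ≤ M * (((ψ (sf m p)) : Measure U) Set.univ).toReal :=
              norm_integral_le_of_norm_le_const (Eventually.of_forall fun ζ => by
                rw [Real.norm_eq_abs]; exact hM _)
          _ = M := by simp
      exact mul_le_mul_of_nonneg_left hb (abs_nonneg _)
    · refine Eventually.of_forall fun p => ?_
      exact (key ⟨fun ζ => g (p.1, p.2, ζ),
        hg.comp (continuous_const.prodMk (continuous_const.prodMk continuous_id))⟩ p).const_mul (f p)
end
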